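/- arXiv:2508.11660 — 4 statements merged into one kernel-verified Lean document; each statement's English description precedes it below -/
import Mathlib

section
/- If n = p²q for distinct primes p, q and σ(n) = 2(n+1), then p = 2 and q = 5 (so n = 20). -/
/-- Sum of positive divisors. -/
def sigma (n : ℕ) : ℕ := ∑ d ∈ n.divisors, d

/-- σ⁺(n) = ∏_{p ∣ n} (σ(p^{v_p(n)}) + 1). -/
def sigmaPlus (n : ℕ) : ℕ := ∏ p ∈ n.primeFactors, (sigma (p ^ n.factorization p) + 1)

/-- φ⁺(n) = ∏_{p ∣ n} (φ(p^{v_p(n)}) + 1). -/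
def phiPlus (n : ℕ) : ℕ := ∏ p ∈ n.primeFactors, (Nat.totient (p ^ n.factorization p) + 1)

lemma sigma_eq (p q : ℕ) (hp : p.Prime) (hq : q.Prime) (hpq : p ≠ q) :
    sigma (p^2*q) = (1+p+p^2)*(1+q) := by
  have hcop : Nat.Coprime (p^2) q := (Nat.coprime_primes hp hq).mpr hpq |>.pow_left _
  unfold sigma
  rw [← ArithmeticFunction.sigma_one_apply, ArithmeticFunction.isMultiplicative_sigma.map_mul_of_coprime hcop,
    ArithmeticFunction.sigma_one_apply, ArithmeticFunction.sigma_one_apply, Nat.sum_divisors_prime_pow hp, hq.divisors]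
  rw [Finset.sum_pair hq.one_lt.ne]
  simp [Finset.sum_range_succ]

theorem stmt_0 (p q n : ℕ) (hp : p.Prime) (hq : q.Prime) (hpq : p ≠ q)
    (hn : n = p ^ 2 * q) (h : sigma n = 2 * (n + 1)) : p = 2 ∧ q = 5 := by
  subst hn
  rw [sigma_eq p q hp hq hpq] at h
  have hp2 := hp.two_le
  have hq2 := hq.two_le
  have h1 : p ≤ p^2 := by nlinarith
  have h2 : 1 ≤ p^2 - p := by
    have : p + 1 ≤ p^2 := by nlinarith
    omega
  have key : q * (p^2 - p - 1) = p^2 + p - 1 := by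
    have h3 : 1 ≤ p^2 + p := by nlinarith
    zify [h1, h2, h3]
    nlinarith [h]
  have hple : p ≤ 3 := by
    by_contra hgt
    push_neg at hgt
    have hle : 2 * (p^2 - p - 1) ≤ q * (p^2 - p - 1) := Nat.mul_le_mul_right _ hq2
    zify [h1, h2] at hle key
    nlinarith
  interval_cases p
  · simp at key; omega
  · exfalso; simp at key; omega
end

section
/- If n = pq is a product of two (not necessarily distinct) primes p and q, then n+1 does not divide σ(n). -/
lemma sigma_eq' (n : ℕ) : sigma n = ArithmeticFunction.sigma 1 n := by
  rw [ArithmeticFunction.sigma_one_apply]; rfl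

lemma sigma_prime' {p : ℕ} (hp : p.Prime) : sigma p = p + 1 := by
  rw [sigma, hp.divisors, Finset.sum_pair hp.one_lt.ne]
  omega

theorem stmt_2 (p q n : ℕ) (hp : p.Prime) (hq : q.Prime) (hn : n = p * q) :
    ¬ (n + 1) ∣ sigma n := by
  subst hn
  have hp2 := hp.two_le
  have hq2 := hq.two_le
  rcases eq_or_ne p q with rfl | hne
  · have hd : sigma (p * p) = p * p + p + 1 := by
      rw [show p * p = p ^ 2 by ring, sigma, Nat.sum_divisors_prime_pow hp]
      simp [Finset.sum_range_succ]
      ring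
    rw [hd]
    rintro ⟨k, hk⟩
    have hkpos : 0 < k := by nlinarith
    have hklt : k < 2 := by nlinarith
    interval_cases k <;> nlinarith
  · have hcop : p.Coprime q := (Nat.coprime_primes hp hq).mpr hne
    have hd : sigma (p * q) = (p + 1) * (q + 1) := by
      rw [sigma_eq', ArithmeticFunction.isMultiplicative_sigma.map_mul_of_coprime hcop,
        ← sigma_eq', ← sigma_eq', sigma_prime' hp, sigma_prime' hq]
    rw [hd]
    intro h
    have h2 : (p * q + 1) ∣ (p + q) := by
      have : (p + 1) * (q + 1) = (p * q + 1) + (p + q) := by ring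
      exact (Nat.dvd_add_right dvd_rfl).mp (this ▸ h)
    have := Nat.le_of_dvd (by omega) h2
    nlinarith
end

section
/- For every positive integer n > 1 with r = ω(n) distinct prime factors, (1/2)·σ(n)/n < σ⁺(n)/(n+1) < 2^r · σ(n)/n. -/
lemma sigma_pos {m : ℕ} (hm : 0 < m) : 0 < sigma m := by
  unfold sigma
  apply Finset.sum_pos
  · intro d hd; exact Nat.pos_of_mem_divisors hd
  · exact ⟨m, Nat.mem_divisors_self m hm.ne'⟩

lemma sigma_prod (n : ℕ) (hn : n ≠ 0) :
    sigma n = ∏ p ∈ n.primeFactors, sigma (p ^ n.factorization p) := by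
  unfold sigma
  rw [Nat.sum_divisors hn]
  refine Finset.prod_congr rfl fun p hp => ?_
  have hp' := Nat.prime_of_mem_primeFactors hp
  rw [← ArithmeticFunction.sigma_one_apply, ArithmeticFunction.sigma_one_apply_prime_pow hp']

theorem stmt_7 (n : ℕ) (hn : 1 < n) :
    (1 / 2 : ℚ) * (sigma n : ℚ) / n < (sigmaPlus n : ℚ) / (n + 1) ∧
    (sigmaPlus n : ℚ) / (n + 1) < 2 ^ n.primeFactors.card * ((sigma n : ℚ) / n) := by
  have hn0 : n ≠ 0 := by omega
  have hne : n.primeFactors.Nonempty := Nat.nonempty_primeFactors.mpr hn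
  have hpos : ∀ p ∈ n.primeFactors, 0 < sigma (p ^ n.factorization p) := fun p hp =>
    sigma_pos (pow_pos (Nat.prime_of_mem_primeFactors hp).pos _)
  have h1 : sigma n < sigmaPlus n := by
    rw [sigma_prod n hn0]
    exact Finset.prod_lt_prod_of_nonempty (by intro p hp; exact hpos p hp)
      (by intro p hp; exact Nat.lt_succ_self _) hne
  have h2 : sigmaPlus n ≤ 2 ^ n.primeFactors.card * sigma n := by
    rw [sigma_prod n hn0, ← Finset.prod_const, ← Finset.prod_mul_distrib]
    exact Finset.prod_le_prod' fun p hp => by have := hpos p hp; omega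
  have hS : 0 < sigma n := sigma_pos (by omega)
  have c1 : (sigma n : ℚ) < sigmaPlus n := by exact_mod_cast h1
  have c2 : (sigmaPlus n : ℚ) ≤ 2 ^ n.primeFactors.card * sigma n := by exact_mod_cast h2
  have cS : (0 : ℚ) < sigma n := by exact_mod_cast hS
  have cn : (2 : ℚ) ≤ n := by exact_mod_cast hn
  have cn0 : (0 : ℚ) < n := by linarith
  have cn1 : (0 : ℚ) < (n : ℚ) + 1 := by linarith
  have cpow : (0 : ℚ) < 2 ^ n.primeFactors.card := by positivity
  constructor
  · rw [div_lt_div_iff₀ cn0 cn1]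
    nlinarith
  · rw [mul_div_assoc', div_lt_div_iff₀ cn1 cn0]
    nlinarith
end

section
/- If n = p^r is a prime power with r ≥ 1 and φ⁺(n) divides n - 1, then p = 2 and r = 2, i.e., n = 4. -/
theorem stmt_12 (p r : ℕ) (hp : p.Prime) (hr : 1 ≤ r)
    (h : phiPlus (p ^ r) ∣ (p ^ r - 1)) : p = 2 ∧ r = 2 := by
  have hp2 := hp.two_le
  have h1 : phiPlus (p ^ r) = p ^ (r - 1) * (p - 1) + 1 := by
    unfold phiPlus
    rw [Nat.primeFactors_prime_pow (k := r) (by omega) hp, hp.factorization_pow,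
      Finset.prod_singleton, Finsupp.single_eq_same, Nat.totient_prime_pow hp (by omega)]
  rw [h1] at h
  rcases eq_or_lt_of_le hr with h1' | hr2
  · -- r = 1 : contradiction
    exfalso
    have e0 : p ^ (r - 1) = 1 := by rw [← h1']; simp
    have e1 : p ^ r = p := by rw [← h1', pow_one]
    rw [e0, e1, one_mul] at h
    have hle := Nat.le_of_dvd (by omega) h
    omega
  · -- r ≥ 2
    obtain ⟨q, rfl⟩ : ∃ q, p = 2 + q := ⟨p - 2, by omega⟩
    have ha2 : 2 ≤ (2 + q) ^ (r - 1) := by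
      calc (2:ℕ) ≤ (2 + q) ^ 1 := by rw [pow_one]; omega
      _ ≤ (2 + q) ^ (r - 1) := Nat.pow_le_pow_right (by omega) (by omega)
    have epr : (2 + q) ^ r = (2 + q) ^ (r - 1) * (2 + q) := by
      rw [← pow_succ]; congr 1; omega
    obtain ⟨a, ha⟩ : ∃ a, (2 + q) ^ (r - 1) = a := ⟨_, rfl⟩
    rw [ha] at ha2 epr h
    obtain ⟨Y, hY⟩ : ∃ Y, a * q = Y := ⟨_, rfl⟩
    have hc : a * (2 + q) = 2 * a + Y := by rw [← hY]; ring
    have hm : a * (2 + q - 1) + 1 = a + Y + 1 := by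
      have h2 : 2 + q - 1 = 1 + q := by omega
      rw [h2, ← hY]; ring
    rw [hm] at h
    rw [hc] at epr
    have hdvd2 : (a + Y + 1) ∣ ((2 + q) ^ r - 1) - (a + Y + 1) :=
      Nat.dvd_sub h dvd_rfl
    have e2 : ((2 + q) ^ r - 1) - (a + Y + 1) = a - 2 := by omega
    rw [e2] at hdvd2
    have hz : a - 2 = 0 := Nat.eq_zero_of_dvd_of_lt hdvd2 (by omega)
    have ha2' : a = 2 := by omega
    have hd : (2 + q) ∣ 2 := by
      have hd0 : (2 + q) ∣ a := ha ▸ dvd_pow_self (2 + q) (Nat.sub_ne_zero_of_lt hr2)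
      rwa [ha2'] at hd0
    have hq : q = 0 := by have := Nat.le_of_dvd (by omega) hd; omega
    subst hq
    have hr1 : r - 1 = 1 := by
      have e3 : (2:ℕ) ^ (r - 1) = 2 ^ 1 := by
        rw [show ((2:ℕ)+0) = 2 from rfl] at ha
        rw [ha, ha2', pow_one]
      exact Nat.pow_right_injective (le_refl 2) e3
    exact ⟨rfl, by omega⟩
end
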